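/- Let (G, C) be a unipolar arrangement whose set of side cliques (the vertex sets of the components of the induced subgraph on V(G)∖C) is nonempty. Let T₁, T₂ ⊆ V(G)∖C be sets each containing exactly one vertex from each side clique, such that T₁ ∩ T₂ equals the set of vertices lying in side cliques of size one. Let A₁ and A₂ be disjoint subsets of C. Suppose M₁ is a matching in G, each of whose edges joins a vertex of T₁ to a vertex of A₁, covering every vertex of T₁, and M₂ is a matching in G, each of whose edges joins a vertex of T₂ to a vertex of A₂, covering every vertex of T₂. Then G is Hamiltonian. -/

import Mathlib

open scoped Classical

noncomputable section

open List in
private def mkWalk {V : Type*} (G : SimpleGraph V) :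
    ∀ (a : V) (l : List V) (b : V), List.Chain G.Adj a (l ++ [b]) → G.Walk a b
  | _, [], _, h => SimpleGraph.Walk.cons (List.chain_cons.1 h).1 SimpleGraph.Walk.nil
  | a, c :: l, b, h =>
      SimpleGraph.Walk.cons (List.chain_cons.1 h).1 (mkWalk G c l b (List.chain_cons.1 h).2)

private lemma mkWalk_support {V : Type*} (G : SimpleGraph V) :
    ∀ (a : V) (l : List V) (b : V) (h : List.Chain G.Adj a (l ++ [b])),
      (mkWalk G a l b h).support = a :: (l ++ [b])
  | a, [], b, h => rfl
  | a, c :: l, b, h => by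
      simp [mkWalk, SimpleGraph.Walk.support_cons, mkWalk_support G c l b _]
      exact mkWalk_support G c l b _

private lemma mkWalk_edge {V : Type*} (G : SimpleGraph V) :
    ∀ (a : V) (l : List V) (b : V) (h : List.Chain G.Adj a (l ++ [b])),
      b ∉ a :: l → ∀ x, s(x, b) ∈ (mkWalk G a l b h).edges →
        x = (a :: l).getLast (List.cons_ne_nil a l)
  | a, [], b, h, hb, x, hx => by
      simp only [mkWalk, SimpleGraph.Walk.edges_cons, SimpleGraph.Walk.edges_nil,
        List.mem_singleton] at hx
      rcases Sym2.eq_iff.1 hx with ⟨rfl, _⟩ | ⟨rfl, rfl⟩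
      · rfl
      · exact absurd (List.mem_singleton_self x) hb
  | a, c :: l, b, h, hb, x, hx => by
      simp only [mkWalk, SimpleGraph.Walk.edges_cons, List.mem_cons] at hx
      rcases hx with hx | hx
      · rcases Sym2.eq_iff.1 hx with ⟨rfl, rfl⟩ | ⟨rfl, rfl⟩
        · exact absurd (by simp) hb
        · exact absurd (by simp) hb
      · have := mkWalk_edge G c l b (List.chain_cons.1 h).2
          (fun hc => hb (List.mem_cons_of_mem _ hc)) x hx
        rw [this]
        exact (List.getLast_cons (List.cons_ne_nil c l)).symm

private lemma ham_of_cycle_list {V : Type*} [Fintype V] (G : SimpleGraph V) (L : List V)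
    (hlen : 3 ≤ L.length) (hnd : L.Nodup) (hmem : ∀ v, v ∈ L)
    (hchain : List.Chain' G.Adj L)
    (hlast : ∀ x ∈ L.getLast?, ∀ y ∈ L.head?, G.Adj x y) :
    G.IsHamiltonian := by
  match L, hnd, hmem, hchain, hlast with
  | [], _, _, _, _ => simp at hlen
  | [_], _, _, _, _ => simp at hlen
  | [_, _], _, _, _, _ => simp at hlen
  | z :: b :: c :: m, hnd, hmem, hchain, hlast =>
    have hzb : G.Adj z b := (List.isChain_cons_cons.1 hchain).1
    have htail : List.Chain' G.Adj (b :: c :: m) := (List.isChain_cons_cons.1 hchain).2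
    have hlastadj : G.Adj ((b :: c :: m).getLast (List.cons_ne_nil _ _)) z := by
      have h1 : (z :: b :: c :: m).getLast? =
          some ((b :: c :: m).getLast (List.cons_ne_nil _ _)) := by
        rw [List.getLast?_eq_getLast (List.cons_ne_nil _ _)]
        congr 1
      exact hlast _ (by rw [h1]; exact rfl) z rfl
    have hchain' : List.Chain' G.Adj ((b :: c :: m) ++ [z]) := by
      apply htail.append (List.isChain_singleton z)
      intro x hx y hy
      rw [List.getLast?_eq_getLast (List.cons_ne_nil _ _), Option.mem_some_iff] at hx
      rw [List.head?_cons, Option.mem_some_iff] at hy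
      subst hx; subst hy; exact hlastadj
    have hchain3 : List.Chain G.Adj b ((c :: m) ++ [z]) := hchain'
    set p : G.Walk b z := mkWalk G b (c :: m) z hchain3 with hp
    have hsupp : p.support = b :: ((c :: m) ++ [z]) := mkWalk_support G b (c :: m) z hchain3
    have hznmem : z ∉ b :: c :: m := (List.nodup_cons.1 hnd).1
    have hbnmem : b ∉ c :: m := (List.nodup_cons.1 (List.nodup_cons.1 hnd).2).1
    have hperm : ((b :: c :: m) ++ [z]).Perm (z :: b :: c :: m) :=
      List.perm_append_singleton z (b :: c :: m)
    have hnd' : ((b :: c :: m) ++ [z]).Nodup := hperm.nodup_iff.2 hnd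
    have hpath : p.IsPath := by
      apply SimpleGraph.Walk.IsPath.mk'
      rw [hsupp]
      exact hnd'
    have hedge : s(z, b) ∉ p.edges := by
      intro hcon
      rw [Sym2.eq_swap] at hcon
      have := mkWalk_edge G b (c :: m) z hchain3 hznmem b hcon
      have h2 : (b :: c :: m).getLast (List.cons_ne_nil _ _) ∈ c :: m := by
        rw [List.getLast_cons (List.cons_ne_nil _ _)]
        exact List.getLast_mem _
      rw [← this] at h2
      exact hbnmem h2
    have hcyc : (SimpleGraph.Walk.cons hzb p).IsCycle :=
      (SimpleGraph.Walk.cons_isCycle_iff p hzb).2 ⟨hpath, hedge⟩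
    have hham : (SimpleGraph.Walk.cons hzb p).IsHamiltonianCycle := by
      rw [SimpleGraph.Walk.isHamiltonianCycle_iff_isCycle_and_support_count_tail_eq_one]
      refine ⟨hcyc, fun a => ?_⟩
      rw [SimpleGraph.Walk.support_cons, List.tail_cons, hsupp]
      exact List.count_eq_one_of_mem hnd' (hperm.mem_iff.2 (hmem a))
    exact fun _ => ⟨z, SimpleGraph.Walk.cons hzb p, hham⟩

private lemma flatMap_getLast? {α β : Type*} (f : α → List β) :
    ∀ (l : List α) (h : l ≠ []), (∀ x ∈ l, f x ≠ []) →
      (l.flatMap f).getLast? = (f (l.getLast h)).getLast?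
  | [], h, _ => absurd rfl h
  | [t], _, hf => by simp
  | t :: t' :: l, _, hf => by
      have hne : ((t' :: l).flatMap f) ≠ [] := by
        rw [List.flatMap_cons]
        exact List.append_ne_nil_of_left_ne_nil (hf t' (by simp)) _
      rw [List.flatMap_cons, List.getLast?_append_of_ne_nil _ hne,
        flatMap_getLast? f (t' :: l) (List.cons_ne_nil _ _)
          (fun x hx => hf x (List.mem_cons_of_mem _ hx)),
        List.getLast_cons (List.cons_ne_nil _ _)]

private lemma chain'_of_forall_mem {α : Type*} {R : α → α → Prop} {l : List α}
    (h : ∀ x ∈ l, ∀ y ∈ l, R x y) : List.Chain' R l :=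
  (List.pairwise_of_forall_mem_list h).isChain

/-- `(G, C)` is a unipolar arrangement: `C` is a clique (the central clique) and every
connected component of the subgraph induced on the complement of `C` is a clique. -/
def IsUnipolarArrangement {V : Type*} (G : SimpleGraph V) (C : Set V) : Prop :=
  G.IsClique C ∧
    ∀ u v : (Cᶜ : Set V), (G.induce Cᶜ).Reachable u v → u ≠ v → (G.induce Cᶜ).Adj u v

/-- If `(G, C)` is a unipolar arrangement with at least one side clique, `T₁, T₂` each
contain exactly one vertex of each side clique and meet exactly in the vertices of the
singleton side cliques, `A₁, A₂ ⊆ C` are disjoint, and there are matchings `M₁` from `T₁`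
into `A₁` covering `T₁` and `M₂` from `T₂` into `A₂` covering `T₂`, then `G` is
Hamiltonian. (For vertices `u, v ∉ C`, being in the same side clique is equivalent to
`u = v ∨ G.Adj u v`.) -/
theorem unipolar_matchings_hamiltonian {V : Type*} [Fintype V]
    (G : SimpleGraph V) (C : Set V) (hU : IsUnipolarArrangement G C)
    (hside : (Cᶜ : Set V).Nonempty)
    (T₁ T₂ : Set V) (hT₁sub : T₁ ⊆ Cᶜ) (hT₂sub : T₂ ⊆ Cᶜ)
    (hT₁ : ∀ v ∈ (Cᶜ : Set V), ∃! t, t ∈ T₁ ∧ (t = v ∨ G.Adj t v))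
    (hT₂ : ∀ v ∈ (Cᶜ : Set V), ∃! t, t ∈ T₂ ∧ (t = v ∨ G.Adj t v))
    (hcap : T₁ ∩ T₂ = {v | v ∈ (Cᶜ : Set V) ∧ ∀ u ∈ (Cᶜ : Set V), ¬ G.Adj u v})
    (A₁ A₂ : Set V) (hA₁ : A₁ ⊆ C) (hA₂ : A₂ ⊆ C) (hA : Disjoint A₁ A₂)
    (M₁ M₂ : Set (Sym2 V))
    (hM₁edges : M₁ ⊆ G.edgeSet)
    (hM₁disj : ∀ e₁ ∈ M₁, ∀ e₂ ∈ M₁, e₁ ≠ e₂ → ∀ v : V, v ∈ e₁ → v ∉ e₂)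
    (hM₁join : ∀ e ∈ M₁, ∃ t ∈ T₁, ∃ a ∈ A₁, e = s(t, a))
    (hM₁cov : ∀ t ∈ T₁, ∃ e ∈ M₁, t ∈ e)
    (hM₂edges : M₂ ⊆ G.edgeSet)
    (hM₂disj : ∀ e₁ ∈ M₂, ∀ e₂ ∈ M₂, e₁ ≠ e₂ → ∀ v : V, v ∈ e₁ → v ∉ e₂)
    (hM₂join : ∀ e ∈ M₂, ∃ t ∈ T₂, ∃ a ∈ A₂, e = s(t, a))
    (hM₂cov : ∀ t ∈ T₂, ∃ e ∈ M₂, t ∈ e) :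
    G.IsHamiltonian := by
  classical
  -- representatives of side cliques
  have hex1 : ∀ v : V, ∃ t, v ∈ (Cᶜ : Set V) →
      (t ∈ T₁ ∧ (t = v ∨ G.Adj t v)) ∧ ∀ s, s ∈ T₁ → (s = v ∨ G.Adj s v) → s = t := by
    intro v
    by_cases hv : v ∈ (Cᶜ : Set V)
    · obtain ⟨t, ht, hu⟩ := hT₁ v hv
      exact ⟨t, fun _ => ⟨ht, fun s hs h2 => hu s ⟨hs, h2⟩⟩⟩
    · exact ⟨v, fun h => absurd h hv⟩
  choose r₁ hr₁ using hex1
  have hex2 : ∀ v : V, ∃ t, v ∈ (Cᶜ : Set V) →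
      (t ∈ T₂ ∧ (t = v ∨ G.Adj t v)) ∧ ∀ s, s ∈ T₂ → (s = v ∨ G.Adj s v) → s = t := by
    intro v
    by_cases hv : v ∈ (Cᶜ : Set V)
    · obtain ⟨t, ht, hu⟩ := hT₂ v hv
      exact ⟨t, fun _ => ⟨ht, fun s hs h2 => hu s ⟨hs, h2⟩⟩⟩
    · exact ⟨v, fun h => absurd h hv⟩
  choose r₂ hr₂ using hex2
  have hr₁T : ∀ v ∈ (Cᶜ : Set V), r₁ v ∈ T₁ := fun v hv => ((hr₁ v hv).1).1
  have hr₁R : ∀ v ∈ (Cᶜ : Set V), r₁ v = v ∨ G.Adj (r₁ v) v := fun v hv => ((hr₁ v hv).1).2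
  have hr₁U : ∀ v ∈ (Cᶜ : Set V), ∀ s ∈ T₁, (s = v ∨ G.Adj s v) → s = r₁ v :=
    fun v hv s hs h => (hr₁ v hv).2 s hs h
  have hr₂T : ∀ v ∈ (Cᶜ : Set V), r₂ v ∈ T₂ := fun v hv => ((hr₂ v hv).1).1
  have hr₂R : ∀ v ∈ (Cᶜ : Set V), r₂ v = v ∨ G.Adj (r₂ v) v := fun v hv => ((hr₂ v hv).1).2
  have hr₂U : ∀ v ∈ (Cᶜ : Set V), ∀ s ∈ T₂, (s = v ∨ G.Adj s v) → s = r₂ v :=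
    fun v hv s hs h => (hr₂ v hv).2 s hs h
  -- matching partners
  have hex3 : ∀ t : V, ∃ a, t ∈ T₁ → a ∈ A₁ ∧ s(t, a) ∈ M₁ := by
    intro t
    by_cases ht : t ∈ T₁
    · obtain ⟨e, he, hte⟩ := hM₁cov t ht
      obtain ⟨t', ht', a, ha, rfl⟩ := hM₁join e he
      refine ⟨a, fun _ => ⟨ha, ?_⟩⟩
      rcases Sym2.mem_iff.1 hte with h | h
      · rw [h]; exact he
      · exact absurd (hA₁ ha) (by rw [← h]; exact hT₁sub ht)
    · exact ⟨t, fun h => absurd h ht⟩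
  choose f₁ hf₁ using hex3
  have hex4 : ∀ t : V, ∃ a, t ∈ T₂ → a ∈ A₂ ∧ s(t, a) ∈ M₂ := by
    intro t
    by_cases ht : t ∈ T₂
    · obtain ⟨e, he, hte⟩ := hM₂cov t ht
      obtain ⟨t', ht', a, ha, rfl⟩ := hM₂join e he
      refine ⟨a, fun _ => ⟨ha, ?_⟩⟩
      rcases Sym2.mem_iff.1 hte with h | h
      · rw [h]; exact he
      · exact absurd (hA₂ ha) (by rw [← h]; exact hT₂sub ht)
    · exact ⟨t, fun h => absurd h ht⟩
  choose f₂ hf₂ using hex4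
  have hf₁A : ∀ t ∈ T₁, f₁ t ∈ A₁ := fun t ht => (hf₁ t ht).1
  have hf₂A : ∀ t ∈ T₂, f₂ t ∈ A₂ := fun t ht => (hf₂ t ht).1
  have hf₁adj : ∀ t ∈ T₁, G.Adj t (f₁ t) :=
    fun t ht => G.mem_edgeSet.1 (hM₁edges (hf₁ t ht).2)
  have hf₂adj : ∀ t ∈ T₂, G.Adj t (f₂ t) :=
    fun t ht => G.mem_edgeSet.1 (hM₂edges (hf₂ t ht).2)
  have hf₁inj : ∀ t ∈ T₁, ∀ t' ∈ T₁, f₁ t = f₁ t' → t = t' := by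
    intro t ht t' ht' heq
    by_contra hne
    have hediff : s(t, f₁ t) ≠ s(t', f₁ t') := by
      intro hcon
      rcases Sym2.eq_iff.1 hcon with ⟨h1, _⟩ | ⟨h1, h2⟩
      · exact hne h1
      · exact (hT₁sub ht) (by rw [h1]; exact hA₁ (hf₁A t' ht'))
    exact hM₁disj _ (hf₁ t ht).2 _ (hf₁ t' ht').2 hediff (f₁ t)
      (Sym2.mem_mk_right _ _) (by rw [heq]; exact Sym2.mem_mk_right _ _)
  have hf₂inj : ∀ t ∈ T₂, ∀ t' ∈ T₂, f₂ t = f₂ t' → t = t' := by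
    intro t ht t' ht' heq
    by_contra hne
    have hediff : s(t, f₂ t) ≠ s(t', f₂ t') := by
      intro hcon
      rcases Sym2.eq_iff.1 hcon with ⟨h1, _⟩ | ⟨h1, h2⟩
      · exact hne h1
      · exact (hT₂sub ht) (by rw [h1]; exact hA₂ (hf₂A t' ht'))
    exact hM₂disj _ (hf₂ t ht).2 _ (hf₂ t' ht').2 hediff (f₂ t)
      (Sym2.mem_mk_right _ _) (by rw [heq]; exact Sym2.mem_mk_right _ _)
  -- side cliques
  set S : V → Set V := fun t => {v | v ∈ (Cᶜ : Set V) ∧ (t = v ∨ G.Adj t v)} with hSdef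
  have hSsub : ∀ t, S t ⊆ (Cᶜ : Set V) := fun t v hv => hv.1
  have hSself : ∀ t ∈ (Cᶜ : Set V), t ∈ S t := fun t ht => ⟨ht, Or.inl rfl⟩
  have hSclique : ∀ t ∈ (Cᶜ : Set V), ∀ u ∈ S t, ∀ v ∈ S t, u ≠ v → G.Adj u v := by
    intro t ht u hu v hv huv
    have key : ∀ w (hw : w ∈ S t), (G.induce (Cᶜ : Set V)).Reachable ⟨t, ht⟩ ⟨w, hw.1⟩ := by
      intro w hw
      rcases hw.2 with h | h
      · subst h; exact SimpleGraph.Reachable.refl _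
      · exact SimpleGraph.Adj.reachable (by simp [h])
    have hreach : (G.induce (Cᶜ : Set V)).Reachable ⟨u, hu.1⟩ ⟨v, hv.1⟩ :=
      (key u hu).symm.trans (key v hv)
    have := hU.2 ⟨u, hu.1⟩ ⟨v, hv.1⟩ hreach (by simp [Subtype.ext_iff, huv])
    simpa using this
  have hSdisj1 : ∀ t ∈ T₁, ∀ t' ∈ T₁, t ≠ t' → ∀ v, v ∈ S t → v ∈ S t' → False :=
    fun t ht t' ht' hne v hv hv' =>
      hne ((hr₁U v hv.1 t ht hv.2).trans (hr₁U v hv'.1 t' ht' hv'.2).symm)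
  have hmemS : ∀ v ∈ (Cᶜ : Set V), v ∈ S (r₁ v) := fun v hv => ⟨hv, hr₁R v hv⟩
  have hr₂mem : ∀ t ∈ (Cᶜ : Set V), r₂ t ∈ S t := by
    intro t ht
    refine ⟨hT₂sub (hr₂T t ht), ?_⟩
    rcases hr₂R t ht with h | h
    · exact Or.inl h.symm
    · exact Or.inr h.symm
  have hr₂injT₁ : ∀ t ∈ T₁, ∀ t' ∈ T₁, t ≠ t' → r₂ t ≠ r₂ t' := by
    intro t ht t' ht' hne hcon
    exact hSdisj1 t ht t' ht' hne (r₂ t) (hr₂mem t (hT₁sub ht))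
      (hcon ▸ hr₂mem t' (hT₁sub ht'))
  have hsingle : ∀ t ∈ T₁, r₂ t = t → ∀ v ∈ S t, v = t := by
    intro t ht hrt v hv
    have ht2 : t ∈ T₂ := hrt ▸ hr₂T t (hT₁sub ht)
    have hmem : t ∈ {v | v ∈ (Cᶜ : Set V) ∧ ∀ u ∈ (Cᶜ : Set V), ¬ G.Adj u v} :=
      hcap ▸ (⟨ht, ht2⟩ : t ∈ T₁ ∩ T₂)
    by_contra hne
    rcases hv.2 with h | h
    · exact hne h.symm
    · exact hmem.2 v hv.1 h.symm
  -- lists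
  set mid : V → List V := fun t => (Set.toFinite (S t \ {t, r₂ t})).toFinset.toList with hmiddef
  set seg : V → List V := fun t => if r₂ t = t then [t] else t :: (mid t ++ [r₂ t]) with hsegdef
  set blk : V → List V := fun t => f₁ t :: (seg t ++ [f₂ (r₂ t)]) with hblkdef
  set ts : List V := (Set.toFinite T₁).toFinset.toList with htsdef
  set RL : List V := (Set.toFinite {c | c ∈ C ∧ (∀ t ∈ T₁, c ≠ f₁ t) ∧
    (∀ t ∈ T₁, c ≠ f₂ (r₂ t))}).toFinset.toList with hRLdef
  set L : List V := ts.flatMap blk ++ RL with hLdef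
  have htsmem : ∀ t, t ∈ ts ↔ t ∈ T₁ := by
    intro t; rw [htsdef]; simp only [Finset.mem_toList, Set.Finite.mem_toFinset]
  have htsnd : ts.Nodup := Finset.nodup_toList _
  have hRLmem : ∀ c, c ∈ RL ↔ c ∈ C ∧ (∀ t ∈ T₁, c ≠ f₁ t) ∧ (∀ t ∈ T₁, c ≠ f₂ (r₂ t)) := by
    intro c; rw [hRLdef]; simp only [Finset.mem_toList, Set.Finite.mem_toFinset]; rfl
  have hRLnd : RL.Nodup := Finset.nodup_toList _
  have htsne : ts ≠ [] := by
    obtain ⟨v, hv⟩ := hside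
    exact List.ne_nil_of_mem ((htsmem _).2 (hr₁T v hv))
  -- segment facts
  have hmidmem : ∀ t v, v ∈ mid t ↔ v ∈ S t \ ({t, r₂ t} : Set V) := by
    intro t v; rw [hmiddef]; simp only [Finset.mem_toList, Set.Finite.mem_toFinset]
  have hsegmem : ∀ t ∈ T₁, ∀ v, v ∈ seg t ↔ v ∈ S t := by
    intro t ht v
    rw [hsegdef]; dsimp only
    split
    · rename_i h
      simp only [List.mem_singleton]
      constructor
      · intro hv0; rw [hv0]; exact hSself t (hT₁sub ht)
      · intro hv; exact hsingle t ht h v hv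
    · rename_i h
      simp only [List.mem_cons, List.mem_append, List.mem_singleton, List.not_mem_nil,
        or_false, hmidmem t]
      constructor
      · rintro (hv0 | hmid | hv0)
        · rw [hv0]; exact hSself t (hT₁sub ht)
        · exact hmid.1
        · rw [hv0]; exact hr₂mem t (hT₁sub ht)
      · intro hv
        by_cases h1 : v = t
        · exact Or.inl h1
        by_cases h2 : v = r₂ t
        · exact Or.inr (Or.inr h2)
        · exact Or.inr (Or.inl ⟨hv, by simp [Set.mem_insert_iff, h1, h2]⟩)
  have hsegnd : ∀ t ∈ T₁, (seg t).Nodup := by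
    intro t ht
    rw [hsegdef]; dsimp only
    split
    · simp
    · rename_i h
      rw [List.nodup_cons]
      constructor
      · intro hc
        rcases List.mem_append.1 hc with hc | hc
        · exact ((hmidmem t t).1 hc).2 (Set.mem_insert _ _)
        · rw [List.mem_singleton] at hc
          exact h hc.symm
      · rw [List.nodup_append]
        refine ⟨Finset.nodup_toList _, List.nodup_singleton _, ?_⟩
        intro x hx y hx2 hxy
        subst hxy
        rw [List.mem_singleton] at hx2
        exact ((hmidmem t x).1 hx).2 (hx2 ▸ Set.mem_insert_of_mem _ rfl)
  have hsegne : ∀ t, seg t ≠ [] := by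
    intro t; rw [hsegdef]; dsimp only; split <;> simp
  have hseghead : ∀ t, (seg t).head? = some t := by
    intro t; rw [hsegdef]; dsimp only; split <;> rfl
  have hseglast : ∀ t, (seg t).getLast? = some (r₂ t) := by
    intro t; rw [hsegdef]; dsimp only; split
    · rename_i h; simp [h]
    · rw [show t :: (mid t ++ [r₂ t]) = (t :: mid t) ++ [r₂ t] by simp,
        List.getLast?_concat]
  have hsegchain : ∀ t ∈ T₁, List.Chain' G.Adj (seg t) := by
    intro t ht
    apply List.Pairwise.isChain
    exact (hsegnd t ht).pairwise_of_forall_ne fun a ha b hb hne =>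
      hSclique t (hT₁sub ht) a ((hsegmem t ht a).1 ha) b ((hsegmem t ht b).1 hb) hne
  -- block facts
  have hblkmem : ∀ t ∈ T₁, ∀ x, x ∈ blk t ↔ (x = f₁ t ∨ x ∈ S t ∨ x = f₂ (r₂ t)) := by
    intro t ht x
    rw [hblkdef]
    simp only [List.mem_cons, List.mem_append, List.mem_singleton, hsegmem t ht x]
    tauto
  have hblknd : ∀ t ∈ T₁, (blk t).Nodup := by
    intro t ht
    rw [hblkdef]; dsimp only
    rw [List.nodup_cons]
    constructor
    · intro hc
      rcases List.mem_append.1 hc with hc | hc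
      · exact (hSsub t ((hsegmem t ht _).1 hc)) (hA₁ (hf₁A t ht))
      · rw [List.mem_singleton] at hc
        exact Set.disjoint_left.1 hA (hf₁A t ht) (hc ▸ hf₂A (r₂ t) (hr₂T t (hT₁sub ht)))
    · rw [List.nodup_append]
      refine ⟨hsegnd t ht, List.nodup_singleton _, ?_⟩
      intro x hx y hx2 hxy
      subst hxy
      rw [List.mem_singleton] at hx2
      exact (hSsub t ((hsegmem t ht x).1 hx))
        (hA₂ (hx2 ▸ hf₂A (r₂ t) (hr₂T t (hT₁sub ht))))
  have hblkne : ∀ t, blk t ≠ [] := by intro t; rw [hblkdef]; simp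
  have hblkhead : ∀ t, (blk t).head? = some (f₁ t) := by intro t; rw [hblkdef]; rfl
  have hblklast : ∀ t, (blk t).getLast? = some (f₂ (r₂ t)) := by
    intro t; rw [hblkdef]; dsimp only
    rw [show f₁ t :: (seg t ++ [f₂ (r₂ t)]) = (f₁ t :: seg t) ++ [f₂ (r₂ t)] by simp,
      List.getLast?_concat]
  have hblkchain : ∀ t ∈ T₁, List.Chain' G.Adj (blk t) := by
    intro t ht
    rw [hblkdef]; dsimp only
    show List.IsChain G.Adj _
    rw [List.isChain_cons]
    constructor
    · intro y hy
      rw [List.head?_append_of_ne_nil _ (hsegne t), hseghead t, Option.mem_some_iff] at hy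
      subst hy
      exact (hf₁adj t ht).symm
    · apply (hsegchain t ht).append (List.isChain_singleton _)
      intro x hx y hy
      rw [hseglast t, Option.mem_some_iff] at hx
      rw [List.head?_cons, Option.mem_some_iff] at hy
      subst hx; subst hy
      exact hf₂adj (r₂ t) (hr₂T t (hT₁sub ht))
  -- L facts
  have hlen : 3 ≤ L.length := by
    obtain ⟨t₀, ts', hts0⟩ := List.exists_cons_of_ne_nil htsne
    have h1 : 0 < (seg t₀).length := List.length_pos_iff.2 (hsegne t₀)
    have h2 : (blk t₀).length = (seg t₀).length + 2 := by
      rw [hblkdef]; simp [List.length_append]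
    rw [hLdef, hts0, List.flatMap_cons, List.length_append, List.length_append]
    omega
  have hnd : L.Nodup := by
    rw [hLdef, List.nodup_append]
    refine ⟨?_, hRLnd, ?_⟩
    · rw [List.nodup_flatMap]
      refine ⟨fun t ht => hblknd t ((htsmem t).1 ht), ?_⟩
      apply htsnd.pairwise_of_forall_ne
      intro t ht t' ht' hne x hx hx'
      have ht1 := (htsmem t).1 ht
      have ht1' := (htsmem t').1 ht'
      have h1 := (hblkmem t ht1 x).1 hx
      have h2 := (hblkmem t' ht1' x).1 hx'
      rcases h1 with rfl | h1 | rfl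
      · rcases h2 with h2 | h2 | h2
        · exact hne (hf₁inj t ht1 t' ht1' h2)
        · exact (hSsub t' h2) (hA₁ (hf₁A t ht1))
        · exact Set.disjoint_left.1 hA (hf₁A t ht1)
            (h2 ▸ hf₂A (r₂ t') (hr₂T t' (hT₁sub ht1')))
      · rcases h2 with h2 | h2 | h2
        · exact (hSsub t h1) (h2 ▸ hA₁ (hf₁A t' ht1'))
        · exact hSdisj1 t ht1 t' ht1' hne x h1 h2
        · exact (hSsub t h1) (h2 ▸ hA₂ (hf₂A (r₂ t') (hr₂T t' (hT₁sub ht1'))))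
      · rcases h2 with h2 | h2 | h2
        · exact Set.disjoint_left.1 hA (h2 ▸ hf₁A t' ht1')
            (h2 ▸ hf₂A (r₂ t) (hr₂T t (hT₁sub ht1)))
        · exact (hSsub t' h2) (hA₂ (hf₂A (r₂ t) (hr₂T t (hT₁sub ht1))))
        · exact hr₂injT₁ t ht1 t' ht1' hne
            (hf₂inj (r₂ t) (hr₂T t (hT₁sub ht1)) (r₂ t') (hr₂T t' (hT₁sub ht1')) h2)
    · intro x hx y hxR hxy
      subst hxy
      obtain ⟨t, ht, hxb⟩ := List.mem_flatMap.1 hx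
      have ht1 := (htsmem t).1 ht
      have hR := (hRLmem x).1 hxR
      rcases (hblkmem t ht1 x).1 hxb with rfl | h | rfl
      · exact hR.2.1 t ht1 rfl
      · exact (hSsub t h) hR.1
      · exact hR.2.2 t ht1 rfl
  have hmem : ∀ v, v ∈ L := by
    intro v
    rw [hLdef, List.mem_append]
    by_cases hv : v ∈ C
    · by_cases h1 : ∃ t ∈ T₁, v = f₁ t
      · obtain ⟨t, ht, rfl⟩ := h1
        exact Or.inl (List.mem_flatMap.2 ⟨t, (htsmem t).2 ht,
          (hblkmem t ht _).2 (Or.inl rfl)⟩)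
      · by_cases h2 : ∃ t ∈ T₁, v = f₂ (r₂ t)
        · obtain ⟨t, ht, rfl⟩ := h2
          exact Or.inl (List.mem_flatMap.2 ⟨t, (htsmem t).2 ht,
            (hblkmem t ht _).2 (Or.inr (Or.inr rfl))⟩)
        · push_neg at h1 h2
          exact Or.inr ((hRLmem v).2 ⟨hv, h1, h2⟩)
    · have hv' : v ∈ (Cᶜ : Set V) := hv
      exact Or.inl (List.mem_flatMap.2 ⟨r₁ v, (htsmem _).2 (hr₁T v hv'),
        (hblkmem _ (hr₁T v hv') v).2 (Or.inr (Or.inl (hmemS v hv')))⟩)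
  have hchain : List.Chain' G.Adj L := by
    rw [hLdef]
    apply List.IsChain.append
    · have hfl : ts.flatMap blk = (ts.map blk).flatten := rfl
      rw [hfl, List.isChain_flatten (by
        intro hc
        obtain ⟨t, _, heq⟩ := List.mem_map.1 hc
        exact hblkne t heq)]
      constructor
      · intro l hl
        obtain ⟨t, ht, rfl⟩ := List.mem_map.1 hl
        exact hblkchain t ((htsmem t).1 ht)
      · rw [List.isChain_map]
        apply chain'_of_forall_mem
        intro t ht t' ht' x hx y hy
        rw [hblklast t, Option.mem_some_iff] at hx
        rw [hblkhead t', Option.mem_some_iff] at hy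
        subst hx; subst hy
        have ht1 := (htsmem t).1 ht
        have ht1' := (htsmem t').1 ht'
        exact hU.1 (hA₂ (hf₂A (r₂ t) (hr₂T t (hT₁sub ht1)))) (hA₁ (hf₁A t' ht1'))
          (fun hc => Set.disjoint_left.1 hA (hf₁A t' ht1')
            (hc ▸ hf₂A (r₂ t) (hr₂T t (hT₁sub ht1))))
    · exact (hRLnd.pairwise_of_forall_ne (fun a ha b hb hne =>
        hU.1 ((hRLmem a).1 ha).1 ((hRLmem b).1 hb).1 hne)).isChain
    · intro x hx y hy
      rcases eq_or_ne RL [] with hRL0 | hRL0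
      · rw [hRL0] at hy; simp at hy
      · have hyR : y ∈ RL := List.mem_of_mem_head? hy
        have hy' := (hRLmem y).1 hyR
        rw [flatMap_getLast? blk ts htsne (fun t _ => hblkne t), hblklast,
          Option.mem_some_iff] at hx
        subst hx
        have htl : ts.getLast htsne ∈ T₁ := (htsmem _).1 (List.getLast_mem htsne)
        exact hU.1 (hA₂ (hf₂A _ (hr₂T _ (hT₁sub htl)))) hy'.1
          (fun hc => hy'.2.2 _ htl hc.symm)
  have hlast : ∀ x ∈ L.getLast?, ∀ y ∈ L.head?, G.Adj x y := by
    intro x hx y hy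
    obtain ⟨t₀, ts', hts0⟩ := List.exists_cons_of_ne_nil htsne
    have hflatne : ts.flatMap blk ≠ [] := by
      rw [hts0, List.flatMap_cons]
      exact List.append_ne_nil_of_left_ne_nil (hblkne t₀) _
    have hhead : L.head? = some (f₁ t₀) := by
      rw [hLdef, List.head?_append_of_ne_nil _ hflatne, hts0, List.flatMap_cons,
        List.head?_append_of_ne_nil _ (hblkne t₀), hblkhead t₀]
    rw [hhead, Option.mem_some_iff] at hy
    subst hy
    have ht₀ : t₀ ∈ T₁ := (htsmem t₀).1 (hts0 ▸ List.mem_cons_self)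
    rcases eq_or_ne RL [] with hRL0 | hRL0
    · rw [hLdef, hRL0, List.append_nil,
        flatMap_getLast? blk ts htsne (fun t _ => hblkne t), hblklast,
        Option.mem_some_iff] at hx
      subst hx
      have htl : ts.getLast htsne ∈ T₁ := (htsmem _).1 (List.getLast_mem htsne)
      exact hU.1 (hA₂ (hf₂A _ (hr₂T _ (hT₁sub htl)))) (hA₁ (hf₁A t₀ ht₀))
        (fun hc => Set.disjoint_left.1 hA (hf₁A t₀ ht₀)
          (hc ▸ hf₂A _ (hr₂T _ (hT₁sub htl))))
    · rw [hLdef, List.getLast?_append_of_ne_nil _ hRL0] at hx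
      have hxR : x ∈ RL := List.mem_of_mem_getLast? hx
      have h := (hRLmem x).1 hxR
      exact hU.1 h.1 (hA₁ (hf₁A t₀ ht₀)) (h.2.1 t₀ ht₀)
  exact ham_of_cycle_list G L hlen hnd hmem hchain hlast
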